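/- In an n-vertex graph with a layered ℓ-separator, all inter-layer edges can be partitioned into at most 2ℓ · log₂ n queues with respect to the recursively constructed ordering σ^q that, in each layer, lists the separator vertices first followed by the components G_1,...,G_k always in the same order. -/

import Mathlib

/-- `lay` is a layering of `G`: every edge joins vertices in the same layer
or in consecutive layers. -/
def IsLayering {V : Type*} (G : SimpleGraph V) (lay : V → ℕ) : Prop :=
  ∀ u v : V, G.Adj u v →
    lay u = lay v ∨ lay u + 1 = lay v ∨ lay v + 1 = lay u

/-- `G` has a layered `ℓ`-separator with respect to the layering `lay`: every
subgraph `G'` of `G` contains a set `S` with at most `ℓ` vertices in each layer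
such that every connected component of `G' − S` has at most `|V(G')| / 2`
vertices. -/
def HasLayeredSeparator {V : Type*} (G : SimpleGraph V) (lay : V → ℕ) (ℓ : ℕ) : Prop :=
  ∀ G' : G.Subgraph, ∃ S ⊆ G'.verts,
    (∀ i : ℕ, (S ∩ {v | lay v = i}).ncard ≤ ℓ) ∧
    ∀ c : ((G'.deleteVerts S).coe).ConnectedComponent,
      2 * c.supp.ncard ≤ G'.verts.ncard

/-- `G` has a stack layout with `s` stacks: an injective position function on
the vertices and an assignment of the edges to `s` stacks such that no two
edges in the same stack cross. -/
def HasStackLayout {V : Type*} (G : SimpleGraph V) (s : ℕ) : Prop :=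
  ∃ (pos : V → ℕ) (f : Sym2 V → ℕ), Function.Injective pos ∧
    (∀ v w : V, G.Adj v w → f s(v, w) < s) ∧
    (∀ v w x y : V, G.Adj v w → G.Adj x y → f s(v, w) = f s(x, y) →
      ¬ (pos v < pos x ∧ pos x < pos w ∧ pos w < pos y))

/-- `G` has a queue layout with `q` queues: an injective position function on
the vertices and an assignment of the edges to `q` queues such that no two
edges in the same queue nest. -/
def HasQueueLayout {V : Type*} (G : SimpleGraph V) (q : ℕ) : Prop :=
  ∃ (pos : V → ℕ) (f : Sym2 V → ℕ), Function.Injective pos ∧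
    (∀ v w : V, G.Adj v w → f s(v, w) < q) ∧
    (∀ v w x y : V, G.Adj v w → G.Adj x y → f s(v, w) = f s(x, y) →
      ¬ (pos v < pos x ∧ pos x < pos y ∧ pos y < pos w))

namespace InterLayerAux

open SimpleGraph Set
open scoped Classical

variable {V : Type*} [Fintype V] (G : SimpleGraph V) (lay : V → ℕ) (ℓ : ℕ)

/-- A fixed injection of `V` into `ℕ`. -/
noncomputable def eV : V → ℕ := fun v => (Fintype.equivFin V v : ℕ)

lemma eV_inj : Function.Injective (eV (V := V)) := fun a b h =>
  (Fintype.equivFin V).injective (Fin.ext h)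

section

variable (hsep : ∀ G' : G.Subgraph, ∃ S ⊆ G'.verts,
    (∀ i : ℕ, (S ∩ {v | lay v = i}).ncard ≤ ℓ) ∧
    ∀ c : ((G'.deleteVerts S).coe).ConnectedComponent,
      2 * c.supp.ncard ≤ G'.verts.ncard)

/-- The separator chosen for the induced subgraph on `U`. -/
noncomputable def sepSet (U : Set V) : Set V :=
  (hsep ((⊤ : G.Subgraph).induce U)).choose

/-- The subgraph obtained from the induced subgraph on `U` by deleting the separator. -/
noncomputable def Del (U : Set V) : G.Subgraph :=
  ((⊤ : G.Subgraph).induce U).deleteVerts (sepSet G lay ℓ hsep U)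

lemma sepSet_spec (U : Set V) :
    sepSet G lay ℓ hsep U ⊆ U ∧
    (∀ i : ℕ, ((sepSet G lay ℓ hsep U) ∩ {v | lay v = i}).ncard ≤ ℓ) ∧
    ∀ c : (Del G lay ℓ hsep U).coe.ConnectedComponent,
      2 * c.supp.ncard ≤ U.ncard := by
  have h := (hsep ((⊤ : G.Subgraph).induce U)).choose_spec
  simpa [Del, sepSet] using h

lemma mem_del_verts {U : Set V} {v : V} :
    v ∈ (Del G lay ℓ hsep U).verts ↔ v ∈ U ∧ v ∉ sepSet G lay ℓ hsep U := by
  simp [Del]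

lemma adj_del {U : Set V} {v w : V} (hv : v ∈ (Del G lay ℓ hsep U).verts)
    (hw : w ∈ (Del G lay ℓ hsep U).verts) (h : G.Adj v w) :
    (Del G lay ℓ hsep U).coe.Adj ⟨v, hv⟩ ⟨w, hw⟩ := by
  rw [SimpleGraph.Subgraph.coe_adj]
  have hv' := (mem_del_verts G lay ℓ hsep).1 hv
  have hw' := (mem_del_verts G lay ℓ hsep).1 hw
  simp [Del, SimpleGraph.Subgraph.deleteVerts_adj, SimpleGraph.Subgraph.induce_adj,
    hv'.1, hv'.2, hw'.1, hw'.2, h]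

/-- The vertex set (in `V`) of a connected component of `Del U`. -/
def cset {U : Set V} (c : (Del G lay ℓ hsep U).coe.ConnectedComponent) : Set V :=
  Subtype.val '' c.supp

/-- An injective positive index for components. -/
noncomputable def cidx {U : Set V} (c : (Del G lay ℓ hsep U).coe.ConnectedComponent) : ℕ :=
  eV (Quot.out c) + 1

lemma cidx_inj {U : Set V} {c c' : (Del G lay ℓ hsep U).coe.ConnectedComponent}
    (h : cidx G lay ℓ hsep c = cidx G lay ℓ hsep c') : c = c' := by
  have h0 : eV (Quot.out c) = eV (Quot.out c') := by
    simp only [cidx] at h; omega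
  have h1 : Quot.out c = Quot.out c' := eV_inj h0
  exact (Quot.out_eq c).symm.trans ((congrArg (Quot.mk _) h1).trans (Quot.out_eq c'))

lemma mem_cset {U : Set V} {v : V} (hv : v ∈ (Del G lay ℓ hsep U).verts)
    {c : (Del G lay ℓ hsep U).coe.ConnectedComponent}
    (hc : (Del G lay ℓ hsep U).coe.connectedComponentMk ⟨v, hv⟩ = c) :
    v ∈ cset G lay ℓ hsep c :=
  ⟨⟨v, hv⟩, (SimpleGraph.ConnectedComponent.mem_supp_iff _ _).2 hc, rfl⟩

lemma cset_card {U : Set V} (c : (Del G lay ℓ hsep U).coe.ConnectedComponent) :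
    2 * (cset G lay ℓ hsep c).ncard ≤ U.ncard := by
  rw [cset, Set.ncard_image_of_injective _ Subtype.val_injective]
  exact (sepSet_spec G lay ℓ hsep U).2.2 c

/-- Rank of a separator vertex inside its layer of the separator. -/
noncomputable def sidx (U : Set V) (u : V) : ℕ :=
  ((sepSet G lay ℓ hsep U ∩ {x | lay x = lay u}) ∩ {x | eV x < eV u}).ncard

lemma sidx_lt {U : Set V} {u : V} (hu : u ∈ sepSet G lay ℓ hsep U) :
    sidx G lay ℓ hsep U u < ℓ := by
  set T : Set V := sepSet G lay ℓ hsep U ∩ {x | lay x = lay u} with hT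
  have huT : u ∈ T := ⟨hu, rfl⟩
  have h1 : (T ∩ {x | eV x < eV u}) ⊆ T \ {u} := by
    rintro x ⟨hx1, hx2⟩
    refine ⟨hx1, ?_⟩
    intro hxe
    simp only [Set.mem_singleton_iff] at hxe
    subst hxe
    exact lt_irrefl (eV x) hx2
  have h2 : (T ∩ {x | eV x < eV u}).ncard ≤ (T \ {u}).ncard :=
    Set.ncard_le_ncard h1 (Set.toFinite _)
  have h3 : (T \ {u}).ncard = T.ncard - 1 := Set.ncard_diff_singleton_of_mem huT
  have h4 : 0 < T.ncard := (Set.ncard_pos (Set.toFinite _)).2 ⟨u, huT⟩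
  have h5 : T.ncard ≤ ℓ := (sepSet_spec G lay ℓ hsep U).2.1 (lay u)
  have h6 : sidx G lay ℓ hsep U u = (T ∩ {x | eV x < eV u}).ncard := by rw [sidx, hT]
  omega

lemma sidx_inj {U : Set V} {u u' : V} (hu : u ∈ sepSet G lay ℓ hsep U)
    (hu' : u' ∈ sepSet G lay ℓ hsep U) (hl : lay u = lay u')
    (h : sidx G lay ℓ hsep U u = sidx G lay ℓ hsep U u') : u = u' := by
  have key : ∀ a b : V, a ∈ sepSet G lay ℓ hsep U → lay a = lay b → eV a < eV b →
      sidx G lay ℓ hsep U a < sidx G lay ℓ hsep U b := by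
    intro a b ha hab hlt
    have hss : (sepSet G lay ℓ hsep U ∩ {x | lay x = lay a}) ∩ {x | eV x < eV a} ⊂
        (sepSet G lay ℓ hsep U ∩ {x | lay x = lay b}) ∩ {x | eV x < eV b} := by
      constructor
      · rintro x ⟨⟨h1, h2⟩, h3⟩
        simp only [Set.mem_setOf_eq, Set.mem_inter_iff] at *
        exact ⟨⟨h1, by omega⟩, by omega⟩
      · intro hsub
        have hmem : a ∈ (sepSet G lay ℓ hsep U ∩ {x | lay x = lay b}) ∩ {x | eV x < eV b} :=
          ⟨⟨ha, by simp only [Set.mem_setOf_eq]; omega⟩, hlt⟩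
        exact lt_irrefl (eV a) (hsub hmem).2
    exact Set.ncard_lt_ncard hss (Set.toFinite _)
  rcases lt_trichotomy (eV u) (eV u') with hlt | heq | hgt
  · exact absurd h (Nat.ne_of_lt (key u u' hu hl hlt))
  · exact eV_inj heq
  · exact absurd h.symm (Nat.ne_of_lt (key u' u hu' hl.symm hgt))

/-- The recursively constructed key of a vertex. -/
noncomputable def keyF : ℕ → Set V → V → List ℕ
  | 0, _, _ => []
  | (fuel+1), U, v =>
    if hv : v ∈ (Del G lay ℓ hsep U).verts then
      cidx G lay ℓ hsep ((Del G lay ℓ hsep U).coe.connectedComponentMk ⟨v, hv⟩) ::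
        keyF fuel
          (cset G lay ℓ hsep ((Del G lay ℓ hsep U).coe.connectedComponentMk ⟨v, hv⟩)) v
    else []

/-- The recursively defined queue index of an (ordered) inter-layer edge. -/
noncomputable def FF : ℕ → Set V → V → V → ℕ
  | 0, _, _, _ => 0
  | (fuel+1), U, v, w =>
    if hv : v ∈ (Del G lay ℓ hsep U).verts then
      if w ∈ (Del G lay ℓ hsep U).verts then
        2 * ℓ + FF fuel
          (cset G lay ℓ hsep ((Del G lay ℓ hsep U).coe.connectedComponentMk ⟨v, hv⟩)) v w
      else ℓ + sidx G lay ℓ hsep U w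
    else sidx G lay ℓ hsep U v

lemma two_le_ncard_of {U : Set V} {v w : V} (hv : v ∈ U) (hw : w ∈ U) (hne : v ≠ w) :
    2 ≤ U.ncard := by
  have := (Set.one_lt_ncard (Set.toFinite U)).2 ⟨v, hv, w, hw, hne⟩
  omega

lemma FF_lt : ∀ (fuel : ℕ) (U : Set V) (v w : V), U.ncard ≤ 2 ^ fuel →
    v ∈ U → w ∈ U → v ≠ w → G.Adj v w →
    FF G lay ℓ hsep fuel U v w < 2 * ℓ * Nat.log 2 U.ncard := by
  intro fuel
  induction fuel with
  | zero =>
    intro U v w hU hv hw hne _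
    have := two_le_ncard_of hv hw hne
    simp only [pow_zero] at hU
    omega
  | succ fuel ih =>
    intro U v w hU hv hw hne hadj
    have h2 : 2 ≤ U.ncard := two_le_ncard_of hv hw hne
    have hlog : 1 ≤ Nat.log 2 U.ncard := by
      rw [Nat.le_log_iff_pow_le (by norm_num) (by omega)]
      simpa using h2
    have hL : 2 * ℓ * 1 ≤ 2 * ℓ * Nat.log 2 U.ncard :=
      Nat.mul_le_mul_left _ hlog
    simp only [FF]
    by_cases hvd : v ∈ (Del G lay ℓ hsep U).verts
    · rw [dif_pos hvd]
      by_cases hwd : w ∈ (Del G lay ℓ hsep U).verts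
      · rw [if_pos hwd]
        set c := (Del G lay ℓ hsep U).coe.connectedComponentMk ⟨v, hvd⟩ with hc
        set C := cset G lay ℓ hsep c with hC
        have hvc : v ∈ C := mem_cset G lay ℓ hsep hvd rfl
        have hwc : w ∈ C := by
          refine mem_cset G lay ℓ hsep hwd ?_
          exact SimpleGraph.ConnectedComponent.sound
            ((adj_del G lay ℓ hsep hvd hwd hadj).symm.reachable)
        have hcard : 2 * C.ncard ≤ U.ncard := cset_card G lay ℓ hsep c
        have hCf : C.ncard ≤ 2 ^ fuel := by
          have : 2 ^ (fuel + 1) = 2 * 2 ^ fuel := by ring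
          omega
        have hrec := ih C v w hCf hvc hwc hne hadj
        have h2C : 2 ≤ C.ncard := two_le_ncard_of hvc hwc hne
        have hstep : Nat.log 2 C.ncard + 1 ≤ Nat.log 2 U.ncard := by
          have e1 : Nat.log 2 (C.ncard * 2) = Nat.log 2 C.ncard + 1 :=
            Nat.log_mul_base (by norm_num) (by omega)
          have e2 : Nat.log 2 (C.ncard * 2) ≤ Nat.log 2 U.ncard :=
            Nat.log_mono_right (by omega)
          omega
        have : 2 * ℓ * (Nat.log 2 C.ncard + 1) ≤ 2 * ℓ * Nat.log 2 U.ncard :=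
          Nat.mul_le_mul_left _ hstep
        have hmul : 2 * ℓ * (Nat.log 2 C.ncard + 1)
            = 2 * ℓ * Nat.log 2 C.ncard + 2 * ℓ := by ring
        omega
      · rw [if_neg hwd]
        have hws : w ∈ sepSet G lay ℓ hsep U := by
          rcases (mem_del_verts G lay ℓ hsep).not.1 hwd with h
          tauto
        have := sidx_lt G lay ℓ hsep hws
        omega
    · rw [dif_neg hvd]
      have hvs : v ∈ sepSet G lay ℓ hsep U := by
        rcases (mem_del_verts G lay ℓ hsep).not.1 hvd with h
        tauto
      have := sidx_lt G lay ℓ hsep hvs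
      omega

lemma KL1 {a : ℕ} {l1 l2 : List ℕ} {e1 e2 : ℕ} :
    toLex ((a :: l1 : List ℕ), e1) < toLex ((a :: l2 : List ℕ), e2) ↔
      toLex (l1, e1) < toLex (l2, e2) := by
  rw [Prod.Lex.lt_iff, Prod.Lex.lt_iff]
  simp only [ofLex_toLex]
  constructor
  · rintro (h | ⟨h1, h2⟩)
    · left
      cases (h : List.Lex _ _ _) with
      | cons h => exact h
      | rel h => exact absurd h (lt_irrefl a)
    · right
      refine ⟨?_, h2⟩
      simpa using h1
  · rintro (h | ⟨h1, h2⟩)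
    · exact Or.inl (List.Lex.cons h)
    · exact Or.inr ⟨congrArg (List.cons a) h1, h2⟩

lemma KL2 {a b : ℕ} {l1 l2 : List ℕ} {e1 e2 : ℕ} (h : a < b) :
    toLex ((a :: l1 : List ℕ), e1) < toLex ((b :: l2 : List ℕ), e2) :=
  Prod.Lex.lt_iff.mpr (Or.inl (List.Lex.rel h))

lemma KL3 {a b : ℕ} {l1 l2 : List ℕ} {e1 e2 : ℕ}
    (h : toLex ((a :: l1 : List ℕ), e1) < toLex ((b :: l2 : List ℕ), e2)) (hne : a ≠ b) :
    a < b := by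
  rcases Prod.Lex.lt_iff.mp h with h | ⟨h1, _⟩
  · cases (h : List.Lex _ _ _) with
    | cons h => exact absurd rfl hne
    | rel h => exact h
  · exact absurd (by injection h1) hne

lemma mem_sep_of {U : Set V} {v : V} (hv : v ∈ U) (h : v ∉ (Del G lay ℓ hsep U).verts) :
    v ∈ sepSet G lay ℓ hsep U := by
  have := (mem_del_verts G lay ℓ hsep).not.1 h
  tauto

/-- The within-layer comparison key. -/
noncomputable def KK (fuel : ℕ) (U : Set V) (a : V) : (List ℕ) ×ₗ ℕ :=
  toLex (keyF G lay ℓ hsep fuel U a, eV a)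

lemma main : ∀ (fuel : ℕ) (U : Set V) (v w x y : V), U.ncard ≤ 2 ^ fuel →
    v ∈ U → w ∈ U → x ∈ U → y ∈ U → G.Adj v w → G.Adj x y →
    lay v + 1 = lay w → lay x + 1 = lay y → lay v = lay x →
    FF G lay ℓ hsep fuel U v w = FF G lay ℓ hsep fuel U x y →
    KK G lay ℓ hsep fuel U v < KK G lay ℓ hsep fuel U x →
    KK G lay ℓ hsep fuel U y < KK G lay ℓ hsep fuel U w → False := by
  intro fuel
  induction fuel with
  | zero =>
    intro U v w x y hU hv hw _ _ _ _ hvw _ _ _ _ _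
    have hne : v ≠ w := by
      intro h
      rw [h] at hvw
      omega
    have := two_le_ncard_of hv hw hne
    simp only [pow_zero] at hU
    omega
  | succ fuel ih =>
    intro U v w x y hU hv hw hx hy avw axy hvw hxy hvx hF K1 K3
    simp only [FF] at hF
    simp only [KK, keyF] at K1 K3
    by_cases hvd : v ∈ (Del G lay ℓ hsep U).verts
    · rw [dif_pos hvd] at hF K1
      by_cases hwd : w ∈ (Del G lay ℓ hsep U).verts
      · rw [if_pos hwd] at hF
        rw [dif_pos hwd] at K3
        by_cases hxd : x ∈ (Del G lay ℓ hsep U).verts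
        · rw [dif_pos hxd] at K1
          by_cases hyd : y ∈ (Del G lay ℓ hsep U).verts
          · rw [dif_pos hxd, if_pos hyd] at hF
            rw [dif_pos hyd] at K3
            -- both edges recursive
            have hcw : (Del G lay ℓ hsep U).coe.connectedComponentMk ⟨w, hwd⟩ =
                (Del G lay ℓ hsep U).coe.connectedComponentMk ⟨v, hvd⟩ :=
              SimpleGraph.ConnectedComponent.sound
                ((adj_del G lay ℓ hsep hvd hwd avw).symm.reachable)
            have hcy : (Del G lay ℓ hsep U).coe.connectedComponentMk ⟨y, hyd⟩ =
                (Del G lay ℓ hsep U).coe.connectedComponentMk ⟨x, hxd⟩ :=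
              SimpleGraph.ConnectedComponent.sound
                ((adj_del G lay ℓ hsep hxd hyd axy).symm.reachable)
            rw [hcw] at K3
            rw [hcy] at K3
            by_cases hcc : (Del G lay ℓ hsep U).coe.connectedComponentMk ⟨v, hvd⟩ =
                (Del G lay ℓ hsep U).coe.connectedComponentMk ⟨x, hxd⟩
            · rw [hcc] at hF K1 K3
              set c := (Del G lay ℓ hsep U).coe.connectedComponentMk ⟨x, hxd⟩ with hc
              have hvc : v ∈ cset G lay ℓ hsep c := mem_cset G lay ℓ hsep hvd hcc
              have hwc : w ∈ cset G lay ℓ hsep c :=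
                mem_cset G lay ℓ hsep hwd (hcw.trans hcc)
              have hxc : x ∈ cset G lay ℓ hsep c := mem_cset G lay ℓ hsep hxd rfl
              have hyc : y ∈ cset G lay ℓ hsep c := mem_cset G lay ℓ hsep hyd hcy
              have hcard : 2 * (cset G lay ℓ hsep c).ncard ≤ U.ncard :=
                cset_card G lay ℓ hsep c
              have hCf : (cset G lay ℓ hsep c).ncard ≤ 2 ^ fuel := by
                have : 2 ^ (fuel + 1) = 2 * 2 ^ fuel := by ring
                omega
              exact ih (cset G lay ℓ hsep c) v w x y hCf hvc hwc hxc hyc avw axy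
                hvw hxy hvx (by omega) (KL1.mp K1) (KL1.mp K3)
            · have hne : cidx G lay ℓ hsep
                  ((Del G lay ℓ hsep U).coe.connectedComponentMk ⟨v, hvd⟩) ≠
                  cidx G lay ℓ hsep
                  ((Del G lay ℓ hsep U).coe.connectedComponentMk ⟨x, hxd⟩) :=
                fun h => hcc (cidx_inj G lay ℓ hsep h)
              have hlt := KL3 K1 hne
              exact absurd K3 (lt_asymm (KL2 hlt))
          · -- edge2 mixed, edge1 recursive: range mismatch
            rw [dif_pos hxd, if_neg hyd] at hF
            have hys : y ∈ sepSet G lay ℓ hsep U := mem_sep_of G lay ℓ hsep hy hyd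
            have := sidx_lt G lay ℓ hsep hys
            omega
        · -- edge2 left-sep, edge1 recursive: range mismatch
          rw [dif_neg hxd] at hF
          have hxs : x ∈ sepSet G lay ℓ hsep U := mem_sep_of G lay ℓ hsep hx hxd
          have := sidx_lt G lay ℓ hsep hxs
          omega
      · -- edge1 mixed
        rw [if_neg hwd] at hF
        have hws : w ∈ sepSet G lay ℓ hsep U := mem_sep_of G lay ℓ hsep hw hwd
        have hwl := sidx_lt G lay ℓ hsep hws
        by_cases hxd : x ∈ (Del G lay ℓ hsep U).verts
        · by_cases hyd : y ∈ (Del G lay ℓ hsep U).verts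
          · rw [dif_pos hxd, if_pos hyd] at hF
            omega
          · -- both mixed
            rw [dif_pos hxd, if_neg hyd] at hF
            have hys : y ∈ sepSet G lay ℓ hsep U := mem_sep_of G lay ℓ hsep hy hyd
            have hwy : w = y :=
              sidx_inj G lay ℓ hsep hws hys (by omega) (by omega)
            rw [hwy] at K3
            exact lt_irrefl _ K3
        · rw [dif_neg hxd] at hF
          have hxs : x ∈ sepSet G lay ℓ hsep U := mem_sep_of G lay ℓ hsep hx hxd
          have := sidx_lt G lay ℓ hsep hxs
          omega
    · -- edge1 left-sep
      rw [dif_neg hvd] at hF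
      have hvs : v ∈ sepSet G lay ℓ hsep U := mem_sep_of G lay ℓ hsep hv hvd
      have hvl := sidx_lt G lay ℓ hsep hvs
      by_cases hxd : x ∈ (Del G lay ℓ hsep U).verts
      · by_cases hyd : y ∈ (Del G lay ℓ hsep U).verts
        · rw [dif_pos hxd, if_pos hyd] at hF
          omega
        · rw [dif_pos hxd, if_neg hyd] at hF
          have hys : y ∈ sepSet G lay ℓ hsep U := mem_sep_of G lay ℓ hsep hy hyd
          omega
      · rw [dif_neg hxd] at hF
        have hxs : x ∈ sepSet G lay ℓ hsep U := mem_sep_of G lay ℓ hsep hx hxd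
        have hvxeq : v = x :=
          sidx_inj G lay ℓ hsep hvs hxs (by omega) (by omega)
        rw [hvxeq] at K1
        exact lt_irrefl _ K1

/-- The global comparison key: layer first, then the recursive key. -/
noncomputable def tk (a : V) : ℕ ×ₗ ((List ℕ) ×ₗ ℕ) :=
  toLex (lay a, toLex (keyF G lay ℓ hsep (Fintype.card V) Set.univ a, eV a))

/-- The position of a vertex: its rank with respect to `tk`. -/
noncomputable def posF (a : V) : ℕ :=
  {b : V | tk G lay ℓ hsep b < tk G lay ℓ hsep a}.ncard

lemma tk_lt_of_lay {a b : V} (h : lay a < lay b) :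
    tk G lay ℓ hsep a < tk G lay ℓ hsep b :=
  Prod.Lex.lt_iff.mpr (Or.inl h)

lemma lay_le_of_tk_lt {a b : V} (h : tk G lay ℓ hsep a < tk G lay ℓ hsep b) :
    lay a ≤ lay b := by
  rcases Prod.Lex.lt_iff.mp h with h | ⟨h1, _⟩
  · exact le_of_lt h
  · exact le_of_eq h1

lemma KK_of_tk_lt {a b : V} (h : tk G lay ℓ hsep a < tk G lay ℓ hsep b)
    (hl : lay a = lay b) :
    KK G lay ℓ hsep (Fintype.card V) Set.univ a <
      KK G lay ℓ hsep (Fintype.card V) Set.univ b := by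
  rcases Prod.Lex.lt_iff.mp h with h | ⟨_, h2⟩
  · exact absurd hl (ne_of_lt h)
  · exact h2

lemma tk_inj : Function.Injective (tk G lay ℓ hsep) := by
  intro a b h
  have h2 := congrArg (fun p => (ofLex ((ofLex p).2)).2) h
  exact eV_inj h2

lemma posF_mono {a b : V} (h : tk G lay ℓ hsep a < tk G lay ℓ hsep b) :
    posF G lay ℓ hsep a < posF G lay ℓ hsep b := by
  have hsub : {c : V | tk G lay ℓ hsep c < tk G lay ℓ hsep a} ⊆
      {c : V | tk G lay ℓ hsep c < tk G lay ℓ hsep b} := fun c hc => lt_trans hc h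
  have ha : a ∉ {c : V | tk G lay ℓ hsep c < tk G lay ℓ hsep a} := by
    intro hx
    simp only [Set.mem_setOf_eq] at hx
    exact lt_irrefl _ hx
  have hss := (Set.ssubset_iff_of_subset hsub).2 ⟨a, h, ha⟩
  exact Set.ncard_lt_ncard hss (Set.toFinite _)

lemma tk_lt_of_posF_lt {a b : V} (h : posF G lay ℓ hsep a < posF G lay ℓ hsep b) :
    tk G lay ℓ hsep a < tk G lay ℓ hsep b := by
  rcases lt_trichotomy (tk G lay ℓ hsep a) (tk G lay ℓ hsep b) with h1 | h1 | h1
  · exact h1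
  · rw [tk_inj G lay ℓ hsep h1] at h
    exact absurd h (lt_irrefl _)
  · exact absurd h (not_lt.2 (le_of_lt (posF_mono G lay ℓ hsep h1)))

lemma posF_inj : Function.Injective (posF G lay ℓ hsep) := by
  intro a b h
  rcases lt_trichotomy (tk G lay ℓ hsep a) (tk G lay ℓ hsep b) with h1 | h1 | h1
  · exact absurd h (ne_of_lt (posF_mono G lay ℓ hsep h1))
  · exact tk_inj G lay ℓ hsep h1
  · exact absurd h.symm (ne_of_lt (posF_mono G lay ℓ hsep h1))

end

end InterLayerAux

/-- In an `n`-vertex graph with a layered `ℓ`-separator, all inter-layer edges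
can be partitioned into at most `2ℓ · log₂ n` queues with respect to a
layer-by-layer vertex ordering. -/
theorem inter_layer_queues {V : Type*} [Fintype V]
    (G : SimpleGraph V) (ℓ : ℕ) (lay : V → ℕ)
    (hlay : IsLayering G lay) (hsep : HasLayeredSeparator G lay ℓ) :
    ∃ (pos : V → ℕ) (f : Sym2 V → ℕ) (q : ℕ), Function.Injective pos ∧
      (∀ u v : V, lay u < lay v → pos u < pos v) ∧
      (q : ℝ) ≤ 2 * ℓ * Real.logb 2 (Fintype.card V) ∧
      (∀ v w : V, G.Adj v w → lay v ≠ lay w → f s(v, w) < q) ∧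
      (∀ v w x y : V, G.Adj v w → G.Adj x y → lay v ≠ lay w → lay x ≠ lay y →
        f s(v, w) = f s(x, y) →
        ¬ (pos v < pos x ∧ pos x < pos y ∧ pos y < pos w)) := by
  classical
  have hsep' : ∀ G' : G.Subgraph, ∃ S ⊆ G'.verts,
      (∀ i : ℕ, (S ∩ {v | lay v = i}).ncard ≤ ℓ) ∧
      ∀ c : ((G'.deleteVerts S).coe).ConnectedComponent,
        2 * c.supp.ncard ≤ G'.verts.ncard := hsep
  set n := Fintype.card V with hn
  have hcard : (Set.univ : Set V).ncard ≤ 2 ^ n := by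
    rw [Set.ncard_univ, Nat.card_eq_fintype_card]
    exact (Nat.lt_two_pow_self).le
  have hsym : ∀ v w : V,
      (if lay v < lay w then InterLayerAux.FF G lay ℓ hsep' n Set.univ v w
        else if lay w < lay v then InterLayerAux.FF G lay ℓ hsep' n Set.univ w v else 0) =
      (if lay w < lay v then InterLayerAux.FF G lay ℓ hsep' n Set.univ w v
        else if lay v < lay w then InterLayerAux.FF G lay ℓ hsep' n Set.univ v w else 0) := by
    intro v w
    rcases lt_trichotomy (lay v) (lay w) with h | h | h
    · rw [if_pos h, if_neg (lt_asymm h), if_pos h]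
    · rw [if_neg (by omega), if_neg (by omega), if_neg (by omega), if_neg (by omega)]
    · rw [if_neg (lt_asymm h), if_pos h, if_pos h]
  refine ⟨InterLayerAux.posF G lay ℓ hsep',
    Sym2.lift ⟨fun v w =>
      if lay v < lay w then InterLayerAux.FF G lay ℓ hsep' n Set.univ v w
      else if lay w < lay v then InterLayerAux.FF G lay ℓ hsep' n Set.univ w v else 0,
      hsym⟩,
    2 * ℓ * Nat.log 2 n, InterLayerAux.posF_inj G lay ℓ hsep', ?_, ?_, ?_, ?_⟩
  · intro u v h
    exact InterLayerAux.posF_mono G lay ℓ hsep' (InterLayerAux.tk_lt_of_lay G lay ℓ hsep' h)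
  · have h := Real.natLog_le_logb n 2
    push_cast
    exact mul_le_mul_of_nonneg_left h (by positivity)
  · intro v w hadj hne
    simp only [Sym2.lift_mk]
    rcases lt_trichotomy (lay v) (lay w) with h | h | h
    · rw [if_pos h]
      have hlt := InterLayerAux.FF_lt G lay ℓ hsep' n Set.univ v w hcard
        (Set.mem_univ v) (Set.mem_univ w) (G.ne_of_adj hadj) hadj
      rwa [Set.ncard_univ, Nat.card_eq_fintype_card] at hlt
    · exact absurd h hne
    · rw [if_neg (lt_asymm h), if_pos h]
      have hlt := InterLayerAux.FF_lt G lay ℓ hsep' n Set.univ w v hcard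
        (Set.mem_univ w) (Set.mem_univ v) (G.ne_of_adj hadj.symm) hadj.symm
      rwa [Set.ncard_univ, Nat.card_eq_fintype_card] at hlt
  · intro v w x y avw axy hvw hxy hf
    rintro ⟨p1, p2, p3⟩
    have t1 := InterLayerAux.tk_lt_of_posF_lt G lay ℓ hsep' p1
    have t2 := InterLayerAux.tk_lt_of_posF_lt G lay ℓ hsep' p2
    have t3 := InterLayerAux.tk_lt_of_posF_lt G lay ℓ hsep' p3
    have tvw := lt_trans t1 (lt_trans t2 t3)
    -- orientation of the two edges
    have hvw' : lay v + 1 = lay w := by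
      rcases hlay v w avw with h | h | h
      · exact absurd h hvw
      · exact h
      · exact absurd tvw
          (lt_asymm (InterLayerAux.tk_lt_of_lay G lay ℓ hsep' (a := w) (b := v) (by omega)))
    have hxy' : lay x + 1 = lay y := by
      rcases hlay x y axy with h | h | h
      · exact absurd h hxy
      · exact h
      · exact absurd t2
          (lt_asymm (InterLayerAux.tk_lt_of_lay G lay ℓ hsep' (a := y) (b := x) (by omega)))
    have l1 := InterLayerAux.lay_le_of_tk_lt G lay ℓ hsep' t1
    have l2 := InterLayerAux.lay_le_of_tk_lt G lay ℓ hsep' t2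
    have l3 := InterLayerAux.lay_le_of_tk_lt G lay ℓ hsep' t3
    have hvx : lay v = lay x := by omega
    have hwy : lay w = lay y := by omega
    -- the queue assignment equality
    simp only [Sym2.lift_mk] at hf
    rw [if_pos (show lay v < lay w by omega), if_pos (show lay x < lay y by omega)] at hf
    exact InterLayerAux.main G lay ℓ hsep' n Set.univ v w x y hcard
      (Set.mem_univ v) (Set.mem_univ w) (Set.mem_univ x) (Set.mem_univ y)
      avw axy hvw' hxy' hvx hf
      (InterLayerAux.KK_of_tk_lt G lay ℓ hsep' t1 hvx)
      (InterLayerAux.KK_of_tk_lt G lay ℓ hsep' t3 hwy.symm)
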